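/- Let φ ∈ L²(ℝ²) with φ ≢ 0. Then it is impossible that ∂_x^{-1}∂_y(φ²) ∈ L²(ℝ²) in the sense that ξ₂ (φ²)^(ξ₁,ξ₂)/ξ₁ ∈ L²(ℝ²). More precisely, if η(ξ₁,ξ₂) := ξ₂ (φ²)^(ξ₁,ξ₂)/ξ₁ defines an L² function, then ∫_ℝ φ(x,y)² dx = 0 for a.e. y, which forces φ = 0. -/

import Mathlib

open MeasureTheory

/-- Fourier transform on `ℝ²`. -/
noncomputable def FT2 (g : ℝ × ℝ → ℝ) (ξ : ℝ × ℝ) : ℂ :=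
  ∫ p : ℝ × ℝ, Complex.exp (-2 * Real.pi * Complex.I * ((ξ.1 * p.1 + ξ.2 * p.2 : ℝ) : ℂ)) * g p

lemma kp_aux_norm_exp (r : ℝ) :
    ‖Complex.exp (-2 * Real.pi * Complex.I * (r : ℂ))‖ = 1 := by
  rw [Complex.norm_exp]
  have : (-2 * Real.pi * Complex.I * (r : ℂ)).re = 0 := by simp
  rw [this, Real.exp_zero]

/-- Obstruction to the higher KP I conservation laws: a nonzero `φ ∈ L²(ℝ²)` cannot satisfy
`∂_x^{-1}∂_y(φ²) ∈ L²(ℝ²)`. If `η(ξ) = (ξ₂/ξ₁)·(φ²)^(ξ)` is in `L²`, then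
`∫ φ(x,y)² dx = 0` for a.e. `y`, which forces `φ = 0`. -/
theorem kp_zero_mass_obstruction (φ : ℝ × ℝ → ℝ)
    (hφ : MemLp φ 2 (volume : Measure (ℝ × ℝ)))
    (hη : MemLp (fun ξ : ℝ × ℝ => ((ξ.2 / ξ.1 : ℝ) : ℂ) * FT2 (fun p => (φ p) ^ 2) ξ) 2
      (volume : Measure (ℝ × ℝ))) :
    (∀ᵐ y : ℝ, (∫ x : ℝ, (φ (x, y)) ^ 2) = 0) ∧ φ =ᵐ[volume] 0 := by
  classical
  set f : ℝ × ℝ → ℝ := fun p => (φ p) ^ 2 with hf_def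
  have hf_nn : ∀ p, 0 ≤ f p := fun p => sq_nonneg _
  have hf_int : Integrable f volume := hφ.integrable_sq
  -- continuity of the Fourier transform of f
  have hexp : ∀ (g : ℝ × ℝ → ℝ), Continuous g →
      Continuous fun q : ℝ × ℝ => Complex.exp (-2 * Real.pi * Complex.I * ((g q : ℝ) : ℂ)) :=
    fun g hg => Complex.continuous_exp.comp
      (continuous_const.mul (Complex.continuous_ofReal.comp hg))
  have hFcont : Continuous (FT2 f) := by
    have hFmeas : ∀ ξ : ℝ × ℝ, AEStronglyMeasurable
        (fun p : ℝ × ℝ => Complex.exp (-2 * Real.pi * Complex.I *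
          ((ξ.1 * p.1 + ξ.2 * p.2 : ℝ) : ℂ)) * (f p : ℂ)) volume := by
      intro ξ
      refine AEStronglyMeasurable.mul ?_ ?_
      · exact (hexp _ ((continuous_const.mul continuous_fst).add
          (continuous_const.mul continuous_snd))).aestronglyMeasurable
      · exact Complex.continuous_ofReal.comp_aestronglyMeasurable hf_int.1
    have hbound : ∀ ξ : ℝ × ℝ, ∀ᵐ p : ℝ × ℝ ∂volume,
        ‖Complex.exp (-2 * Real.pi * Complex.I *
          ((ξ.1 * p.1 + ξ.2 * p.2 : ℝ) : ℂ)) * (f p : ℂ)‖ ≤ ‖f p‖ := by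
      intro ξ
      filter_upwards with p
      rw [norm_mul, kp_aux_norm_exp, one_mul, Complex.norm_real]
    have hcont : ∀ᵐ p : ℝ × ℝ ∂volume, Continuous fun ξ : ℝ × ℝ =>
        Complex.exp (-2 * Real.pi * Complex.I *
          ((ξ.1 * p.1 + ξ.2 * p.2 : ℝ) : ℂ)) * (f p : ℂ) := by
      filter_upwards with p
      exact (hexp (fun ξ : ℝ × ℝ => ξ.1 * p.1 + ξ.2 * p.2)
        ((continuous_fst.mul continuous_const).add
          (continuous_snd.mul continuous_const))).mul continuous_const
    exact continuous_of_dominated hFmeas hbound hf_int.norm hcont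
  -- value at the origin
  have hF0 : FT2 f 0 = ((∫ p, f p : ℝ) : ℂ) := by
    unfold FT2
    simp only [Prod.fst_zero, Prod.snd_zero, zero_mul, add_zero, Complex.ofReal_zero,
      mul_zero, Complex.exp_zero, one_mul]
    exact integral_ofReal
  -- the total mass vanishes
  have hI : ∫ p, f p = 0 := by
    by_contra hne
    have hm : 0 < ∫ p, f p := lt_of_le_of_ne (integral_nonneg hf_nn) (Ne.symm hne)
    set m : ℝ := ∫ p, f p with hm_def
    obtain ⟨δ, hδpos, hδ⟩ := Metric.continuousAt_iff.mp hFcont.continuousAt (m / 2)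
      (by linarith)
    -- lower bound for ‖FT2 f ξ‖ near 0
    have hlow : ∀ ξ : ℝ × ℝ, dist ξ 0 < δ → m / 2 ≤ ‖FT2 f ξ‖ := by
      intro ξ hξ
      have h1 : dist (FT2 f ξ) (FT2 f 0) < m / 2 := hδ hξ
      have h2 : ‖FT2 f 0‖ = m := by
        rw [hF0, Complex.norm_real, Real.norm_eq_abs, abs_of_pos hm]
      have h3 : ‖FT2 f 0‖ - ‖FT2 f ξ‖ ≤ ‖FT2 f 0 - FT2 f ξ‖ := norm_sub_norm_le _ _
      rw [dist_eq_norm, ← norm_neg, neg_sub] at h1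
      linarith
    set S : Set (ℝ × ℝ) := Set.Ioo (0 : ℝ) (δ / 2) ×ˢ Set.Ioo (δ / 4) (δ / 2) with hS_def
    have hSm : MeasurableSet S := measurableSet_Ioo.prod measurableSet_Ioo
    set K : ℝ := (m / 2 * (δ / 4)) ^ 2 with hK_def
    have hKpos : 0 < K := by positivity
    -- pointwise lower bound on S
    have hptwise : ∀ ξ : ℝ × ℝ, ξ ∈ S →
        K / ξ.1 ^ 2 ≤ ‖((ξ.2 / ξ.1 : ℝ) : ℂ) * FT2 f ξ‖ ^ 2 := by
      intro ξ hξ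
      obtain ⟨hξ1, hξ2⟩ := hξ
      have h1 : (0 : ℝ) < ξ.1 := hξ1.1
      have hdist : dist ξ 0 < δ := by
        rw [Prod.dist_eq]
        have : dist ξ.1 (0 : ℝ) < δ := by
          rw [Real.dist_eq, sub_zero, abs_of_pos h1]; linarith [hξ1.2]
        have h2 : dist ξ.2 (0 : ℝ) < δ := by
          rw [Real.dist_eq, sub_zero, abs_of_pos (lt_trans (by linarith) hξ2.1)]
          linarith [hξ2.2]
        simp only [Prod.fst_zero, Prod.snd_zero] at *
        exact max_lt this h2
      have hF := hlow ξ hdist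
      have hnorm : ‖((ξ.2 / ξ.1 : ℝ) : ℂ) * FT2 f ξ‖ = (ξ.2 / ξ.1) * ‖FT2 f ξ‖ := by
        rw [norm_mul, Complex.norm_real, Real.norm_eq_abs,
          abs_of_pos (div_pos (lt_trans (by linarith) hξ2.1) h1)]
      have hstep : m / 2 * (δ / 4) / ξ.1 ≤ (ξ.2 / ξ.1) * ‖FT2 f ξ‖ := by
        have hq : δ / 4 / ξ.1 ≤ ξ.2 / ξ.1 := (div_le_div_iff_of_pos_right h1).mpr hξ2.1.le
        have : m / 2 * (δ / 4) / ξ.1 = δ / 4 / ξ.1 * (m / 2) := by ring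
        rw [this]
        exact mul_le_mul hq hF (by linarith) (div_nonneg (by linarith [hξ2.1]) h1.le)
      have hsq : (m / 2 * (δ / 4) / ξ.1) ^ 2 ≤ ‖((ξ.2 / ξ.1 : ℝ) : ℂ) * FT2 f ξ‖ ^ 2 := by
        rw [hnorm]
        exact pow_le_pow_left₀ (by positivity) hstep 2
      calc K / ξ.1 ^ 2 = (m / 2 * (δ / 4) / ξ.1) ^ 2 := by
            rw [hK_def, div_pow]
        _ ≤ _ := hsq
    -- integrability of the square of η restricted to S
    have h1 : Integrable (fun ξ : ℝ × ℝ =>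
        ‖((ξ.2 / ξ.1 : ℝ) : ℂ) * FT2 f ξ‖ ^ 2) volume :=
      (memLp_two_iff_integrable_sq_norm hη.1).mp hη
    have h2 : IntegrableOn (fun ξ : ℝ × ℝ =>
        ‖((ξ.2 / ξ.1 : ℝ) : ℂ) * FT2 f ξ‖ ^ 2) S volume := h1.integrableOn
    have h3 : IntegrableOn (fun ξ : ℝ × ℝ => K / ξ.1 ^ 2) S volume := by
      refine Integrable.mono' h2 ?_ ?_
      · exact (measurable_const.div ((measurable_fst).pow_const 2)).aestronglyMeasurable
      · rw [ae_restrict_iff' hSm]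
        filter_upwards with ξ hξ
        rw [Real.norm_eq_abs, abs_of_nonneg (by positivity)]
        exact hptwise ξ hξ
    -- transfer to product measure and apply Fubini
    have h4 : Integrable (fun ξ : ℝ × ℝ => K / ξ.1 ^ 2)
        (((volume : Measure ℝ).restrict (Set.Ioo (0 : ℝ) (δ / 2))).prod
          ((volume : Measure ℝ).restrict (Set.Ioo (δ / 4) (δ / 2)))) := by
      rw [Measure.prod_restrict, ← Measure.volume_eq_prod]
      exact h3
    obtain ⟨-, h5⟩ := (integrable_prod_iff h4.1).mp h4
    -- the inner integral is a positive constant times K / x ^ 2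
    have h6 : IntegrableOn (fun x : ℝ => δ / 4 * ‖K / x ^ 2‖)
        (Set.Ioo (0 : ℝ) (δ / 2)) volume := by
      have heq : (fun x : ℝ => ∫ y : ℝ, ‖K / (x, y).1 ^ 2‖
          ∂((volume : Measure ℝ).restrict (Set.Ioo (δ / 4) (δ / 2)))) =
          fun x : ℝ => δ / 4 * ‖K / x ^ 2‖ := by
        funext x
        have hrfl : (∫ y : ℝ in Set.Ioo (δ / 4) (δ / 2), ‖K / (x, y).1 ^ 2‖) =
            ∫ _ : ℝ in Set.Ioo (δ / 4) (δ / 2), ‖K / x ^ 2‖ := rfl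
        rw [hrfl, setIntegral_const, measureReal_def, Real.volume_Ioo, smul_eq_mul,
          ENNReal.toReal_ofReal (by linarith : (0:ℝ) ≤ δ / 2 - δ / 4)]
        congr 1
        ring
      rw [← heq]
      exact h5
    have h7 : IntegrableOn (fun x : ℝ => x ^ (-2 : ℝ)) (Set.Ioo (0 : ℝ) (δ / 2)) volume := by
      have h6' := h6.const_mul ((δ / 4 * K)⁻¹)
      refine IntegrableOn.congr_fun (f := fun x : ℝ => (δ / 4 * K)⁻¹ * (δ / 4 * ‖K / x ^ 2‖))
        h6' ?_ measurableSet_Ioo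
      intro x hx
      have hx0 : (0 : ℝ) < x := hx.1
      have hxp : x ^ (-2 : ℝ) = (x ^ 2)⁻¹ := by
        have h2 : ((2 : ℕ) : ℝ) = (2 : ℝ) := by norm_num
        rw [Real.rpow_neg hx0.le, ← h2, Real.rpow_natCast]
      show (δ / 4 * K)⁻¹ * (δ / 4 * ‖K / x ^ 2‖) = x ^ (-2 : ℝ)
      rw [hxp, Real.norm_eq_abs, abs_of_nonneg (by positivity : (0:ℝ) ≤ K / x ^ 2)]
      have hδ0 : δ ≠ 0 := ne_of_gt hδpos
      have hK0 : K ≠ 0 := ne_of_gt hKpos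
      have hx0' : x ≠ 0 := ne_of_gt hx0
      field_simp
    rw [intervalIntegral.integrableOn_Ioo_rpow_iff (by linarith : (0:ℝ) < δ / 2)] at h7
    norm_num at h7
  -- f vanishes a.e.
  have hf0 : f =ᵐ[volume] 0 := (integral_eq_zero_iff_of_nonneg hf_nn hf_int).mp hI
  have hφ0 : φ =ᵐ[volume] 0 := by
    filter_upwards [hf0] with p hp
    exact sq_eq_zero_iff.mp hp
  refine ⟨?_, hφ0⟩
  have hswap : ∀ᵐ y : ℝ, ∀ᵐ x : ℝ, φ (x, y) = 0 := by
    have h := hφ0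
    rw [Measure.volume_eq_prod] at h
    have h2 : ∀ᵐ w : ℝ × ℝ ∂((volume : Measure ℝ).prod volume), φ (w.2, w.1) = 0 := by
      have := (Measure.measurePreserving_swap
        (μ := (volume : Measure ℝ)) (ν := (volume : Measure ℝ))).quasiMeasurePreserving.ae h
      filter_upwards [this] with w hw
      exact hw
    exact Measure.ae_ae_of_ae_prod h2
  filter_upwards [hswap] with y hy
  have : (fun x : ℝ => φ (x, y) ^ 2) =ᵐ[volume] 0 := by
    filter_upwards [hy] with x hx
    simp [hx]
  rw [integral_congr_ae this]
  simp
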